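/- Lemma 9 (SL-invariant operators commute with all tensor-power states): Let A be a linear operator on (ℂ^k)^{⊗n} such that A commutes with g^{⊗n} for every g ∈ SL(k, ℂ) (every k×k complex matrix with determinant 1). Then A commutes with ρ^{⊗n} for every density matrix ρ on ℂ^k. -/
import Mathlib


open scoped BigOperators Classical ComplexOrder
open Matrix Filter
open Topology

noncomputable def matFun {d : Type*} [Fintype d] [DecidableEq d] (f : ℝ → ℝ)
    (A : Matrix d d ℂ) : Matrix d d ℂ :=
  if hA : A.IsHermitian then hA.cfc f else 0

noncomputable def matLog {d : Type*} [Fintype d] [DecidableEq d]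
    (A : Matrix d d ℂ) : Matrix d d ℂ :=
  matFun Real.log A

noncomputable def tensPow {k : ℕ} (ρ : Matrix (Fin k) (Fin k) ℂ) (n : ℕ) :
    Matrix (Fin n → Fin k) (Fin n → Fin k) ℂ :=
  fun x y => ∏ i, ρ (x i) (y i)

structure IsPVM {d ι : Type*} [Fintype d] [DecidableEq d] [Fintype ι]
    (E : ι → Matrix d d ℂ) : Prop where
  herm : ∀ i, (E i).IsHermitian
  idem : ∀ i, E i * E i = E i
  ne_zero : ∀ i, E i ≠ 0
  orth : ∀ i j, i ≠ j → E i * E j = 0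
  sum_one : ∑ i, E i = 1

noncomputable def pvmWidth {d ι : Type*} [Fintype d] [DecidableEq d] [Fintype ι]
    (E : ι → Matrix d d ℂ) : ℕ :=
  Finset.univ.sup fun i => (E i).rank

def Refines {d ι κ : Type*} [Fintype d] [DecidableEq d] [Fintype ι] [Fintype κ]
    (M : κ → Matrix d d ℂ) (E : ι → Matrix d d ℂ) : Prop :=
  ∃ f : κ → ι, ∀ i, E i = ∑ j ∈ Finset.univ.filter (fun j => f j = i), M j

def IsTest {d : Type*} [Fintype d] [DecidableEq d] (A : Matrix d d ℂ) : Prop :=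
  A.PosSemidef ∧ (1 - A).PosSemidef

noncomputable def pinch {d ι : Type*} [Fintype d] [DecidableEq d] [Fintype ι]
    (E : ι → Matrix d d ℂ) (A : Matrix d d ℂ) : Matrix d d ℂ :=
  ∑ i, E i * A * E i

/-- Quantum relative entropy `D(ρ‖σ) = Tr ρ (log ρ - log σ)`. -/
noncomputable def qRelEnt {d : Type*} [Fintype d] [DecidableEq d]
    (ρ σ : Matrix d d ℂ) : ℝ :=
  (Matrix.trace (ρ * (matLog ρ - matLog σ))).re

lemma tensPow_smul {k : ℕ} (c : ℂ) (g : Matrix (Fin k) (Fin k) ℂ) (n : ℕ) :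
    tensPow (c • g) n = c ^ n • tensPow g n := by
  ext x y
  simp [tensPow, Finset.prod_mul_distrib, Finset.prod_const]

lemma aux_unit {k n : ℕ} (A : Matrix (Fin n → Fin k) (Fin n → Fin k) ℂ)
    (hA : ∀ g : Matrix (Fin k) (Fin k) ℂ, g.det = 1 → A * tensPow g n = tensPow g n * A)
    (hk : 0 < k) (g : Matrix (Fin k) (Fin k) ℂ) (hg : g.det ≠ 0) :
    A * tensPow g n = tensPow g n * A := by
  obtain ⟨c, hc⟩ := IsAlgClosed.exists_pow_nat_eq g.det hk
  have hc0 : c ≠ 0 := by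
    intro h; rw [h] at hc; simp [zero_pow hk.ne'] at hc; exact hg hc.symm
  have hdet : (c⁻¹ • g).det = 1 := by
    rw [Matrix.det_smul, inv_pow]
    simp only [Fintype.card_fin]
    rw [hc, inv_mul_cancel₀ hg]
  have hgeq : g = c • (c⁻¹ • g) := by rw [smul_smul, mul_inv_cancel₀ hc0, one_smul]
  have hcomm := hA (c⁻¹ • g) hdet
  have hT : tensPow g n = c ^ n • tensPow (c⁻¹ • g) n := by
    conv_lhs => rw [hgeq]
    rw [tensPow_smul]
  rw [hT, Matrix.mul_smul, Matrix.smul_mul, hcomm]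

/-- **Lemma 9.** If a linear operator `A` on `(ℂ^k)^{⊗n}` commutes with `g^{⊗n}` for
every `g ∈ SL(k, ℂ)`, then `A` commutes with `ρ^{⊗n}` for every density matrix `ρ`. -/
theorem stmt_15 (k n : ℕ)
    (A : Matrix (Fin n → Fin k) (Fin n → Fin k) ℂ)
    (hA : ∀ g : Matrix (Fin k) (Fin k) ℂ, g.det = 1 → A * tensPow g n = tensPow g n * A)
    (ρ : Matrix (Fin k) (Fin k) ℂ) (hρ : ρ.PosSemidef) (hρ1 : ρ.trace = 1) :
    A * tensPow ρ n = tensPow ρ n * A := by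
  rcases Nat.eq_zero_or_pos k with hk | hk
  · subst hk
    exact hA ρ (by simp [Matrix.det_isEmpty])
  -- For t > 0, ρ + t•1 is invertible
  have key : ∀ t : ℝ, 0 < t →
      A * tensPow (ρ + (t : ℂ) • 1) n = tensPow (ρ + (t : ℂ) • 1) n * A := by
    intro t ht
    apply aux_unit A hA hk
    have hpd : (ρ + (t : ℂ) • 1).PosDef := by
      apply Matrix.PosDef.posSemidef_add hρ
      rw [Matrix.smul_one_eq_diagonal]
      exact Matrix.PosDef.diagonal fun i => by exact_mod_cast ht
    exact hpd.det_pos.ne'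
  -- continuity
  set F : ℝ → Matrix (Fin n → Fin k) (Fin n → Fin k) ℂ := fun t =>
    A * tensPow (ρ + (t : ℂ) • 1) n - tensPow (ρ + (t : ℂ) • 1) n * A with hF
  have hTcont : Continuous fun t : ℝ => tensPow (ρ + (t : ℂ) • 1) n := by
    apply continuous_pi; intro x; apply continuous_pi; intro y
    apply continuous_finset_prod
    intro i _
    simp only [Matrix.add_apply, Matrix.smul_apply, smul_eq_mul]
    exact continuous_const.add ((Complex.continuous_ofReal).mul continuous_const)
  have hFcont : Continuous F := by
    exact ((continuous_const.matrix_mul hTcont).sub (hTcont.matrix_mul continuous_const))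
  have hzero : ∀ t ∈ Set.Ioi (0:ℝ), F t = 0 := by
    intro t ht
    simp only [hF, sub_eq_zero]
    exact key t ht
  have h1 : Tendsto F (𝓝[>] (0:ℝ)) (𝓝 (F 0)) :=
    (hFcont.tendsto 0).mono_left nhdsWithin_le_nhds
  have h2 : Tendsto F (𝓝[>] (0:ℝ)) (𝓝 0) := by
    refine Tendsto.congr' ?_ tendsto_const_nhds
    exact eventually_nhdsWithin_of_forall fun t ht => (hzero t ht).symm
  have hF0 : F 0 = 0 := tendsto_nhds_unique h1 h2
  simp only [hF, Complex.ofReal_zero, zero_smul, add_zero] at hF0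
  exact sub_eq_zero.mp hF0
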